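/- Let H be a numerical semigroup of minimal multiplicity. Then H is nearly Gorenstein if and only if H is almost symmetric. More precisely, writing H = ⟨n₁,…,n_e⟩ with n₁ < ⋯ < n_e and n₁ = e, H is nearly Gorenstein if and only if n₁ + n_e = n_i + n_{e−i+1} for i = 2, …, e. -/

import Mathlib

/-- The set of integers belonging to the numerical semigroup `H ⊆ ℕ`. -/
def HZ (H : AddSubmonoid ℕ) : Set ℤ := {z : ℤ | ∃ h ∈ H, (h : ℤ) = z}

/-- The set of pseudo-Frobenius numbers of `H`: the `f ∉ H` with `f + h ∈ H`
for every nonzero `h ∈ H`. -/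
def PF (H : AddSubmonoid ℕ) : Set ℕ := {f | f ∉ H ∧ ∀ h ∈ H, h ≠ 0 → f + h ∈ H}

/-- The canonical relative ideal `Ω_H = {x ∈ ℤ : F − x ∉ H}`, where `F` is the
Frobenius number of `H`. -/
def Omega (H : AddSubmonoid ℕ) (F : ℕ) : Set ℤ := {x : ℤ | (F : ℤ) - x ∉ HZ H}

/-- The anti-canonical relative ideal `Ω_H⁻¹ = {z ∈ ℤ : z + Ω_H ⊆ H}`. -/
def OmegaInv (H : AddSubmonoid ℕ) (F : ℕ) : Set ℤ :=
  {z : ℤ | ∀ w ∈ Omega H F, z + w ∈ HZ H}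

open Pointwise

/-- Auxiliary context: `N` enumerates the minimal generators (extended to `ℕ`),
`N 0 = e` is the multiplicity, which equals the embedding dimension. -/
structure MMCtx (e : ℕ) (N : ℕ → ℕ) (H : AddSubmonoid ℕ) : Prop where
  he : 1 < e
  mono : ∀ {i j : ℕ}, i < j → j < e → N i < N j
  base : N 0 = e
  gen : H = AddSubmonoid.closure (N '' Set.Iio e)
  mini : ∀ i < e, N i ∉ AddSubmonoid.closure ((N '' Set.Iio e) \ {N i})

namespace MMCtx

variable {e : ℕ} {N : ℕ → ℕ} {H : AddSubmonoid ℕ}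

lemma epos (c : MMCtx e N H) : 0 < e := by have := c.he; omega

lemma memN (c : MMCtx e N H) {i : ℕ} (hi : i < e) : N i ∈ H := by
  rw [c.gen]; exact AddSubmonoid.subset_closure ⟨i, hi, rfl⟩

lemma le_N (c : MMCtx e N H) {i : ℕ} (hi : i < e) : e ≤ N i := by
  rcases Nat.eq_zero_or_pos i with h | h
  · subst h; rw [c.base]
  · have := c.mono h hi; rw [c.base] at this; omega

lemma lt_N (c : MMCtx e N H) {i : ℕ} (h1 : 1 ≤ i) (hi : i < e) : e < N i := by
  have := c.mono h1 hi; rw [c.base] at this; omega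

lemma e_mem (c : MMCtx e N H) : e ∈ H := by
  have := c.memN c.epos; rwa [c.base] at this

lemma mul_e_mem (c : MMCtx e N H) (t : ℕ) : t * e ∈ H := by
  have := H.nsmul_mem c.e_mem t
  simpa [smul_eq_mul] using this

lemma ge_of_mem (c : MMCtx e N H) {h : ℕ} (hh : h ∈ H) (h0 : h ≠ 0) : e ≤ h := by
  rw [c.gen] at hh
  revert h0
  induction hh using AddSubmonoid.closure_induction with
  | mem x hx =>
    obtain ⟨i, hi, rfl⟩ := hx
    exact fun _ => c.le_N hi
  | zero => exact fun h => absurd rfl h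
  | add x y hx hy px py =>
    intro hxy
    rcases Nat.eq_zero_or_pos x with h | h
    · subst h; simpa using py (by simpa using hxy)
    · have := px (by omega); omega

/-- Core contradiction helper: `N k` cannot be `x + t*e` with
`x` in the closure of the other generators.  -/
lemma helper (c : MMCtx e N H) {x k t : ℕ} (hk : k < e) (hek : e < N k)
    (hx : x ∈ AddSubmonoid.closure ((N '' Set.Iio e) \ {N k}))
    (heq : N k = x + t * e) : False := by
  apply c.mini k hk
  have h0 : N 0 ∈ (N '' Set.Iio e) \ {N k} :=
    ⟨⟨0, c.epos, rfl⟩, by simp [c.base]; omega⟩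
  have ht : t • N 0 ∈ AddSubmonoid.closure ((N '' Set.Iio e) \ {N k}) :=
    AddSubmonoid.nsmul_mem _ (AddSubmonoid.subset_closure h0) t
  have := add_mem hx ht
  have harith : x + t • N 0 = N k := by
    rw [smul_eq_mul, c.base]; omega
  rwa [harith] at this

lemma not_dvd (c : MMCtx e N H) {i : ℕ} (h1 : 1 ≤ i) (hi : i < e) : ¬ e ∣ N i := by
  rintro ⟨t, ht⟩
  have hte : e * t = t * e := Nat.mul_comm e t
  exact c.helper (t := t) hi (c.lt_N h1 hi) (zero_mem _) (by omega)

lemma distinct (c : MMCtx e N H) {i j : ℕ} (hij : i < j) (hj : j < e) :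
    N i % e ≠ N j % e := by
  intro h
  have hlt : N i < N j := c.mono hij hj
  have hd : e ∣ N j - N i := (Nat.modEq_iff_dvd' hlt.le).mp h
  obtain ⟨t, ht⟩ := hd
  have hte : e * t = t * e := Nat.mul_comm e t
  have ht1 : 1 ≤ t := by
    rcases Nat.eq_zero_or_pos t with h0 | h0
    · subst h0; simp at ht; omega
    · exact h0
  have hNi : N i ∈ (N '' Set.Iio e) \ {N j} :=
    ⟨⟨i, hij.trans hj, rfl⟩, fun hmem => absurd (Set.mem_singleton_iff.mp hmem) hlt.ne⟩
  exact c.helper (t := t) hj (lt_of_le_of_lt (c.le_N (by omega : i < e)) hlt)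
    (AddSubmonoid.subset_closure hNi) (by omega)

lemma class_eq (c : MMCtx e N H) {i k : ℕ} (hi : i < e) (hk : k < e)
    (h : N i % e = N k % e) : i = k := by
  rcases lt_trichotomy i k with h' | h' | h'
  · exact absurd h (c.distinct h' hk)
  · exact h'
  · exact absurd h.symm (c.distinct h' hi)

lemma surj_res (c : MMCtx e N H) {r : ℕ} (hr : r < e) : ∃ i < e, N i % e = r := by
  have hpos : 0 < e := c.epos
  let f : Fin e → Fin e := fun i => ⟨N i % e, Nat.mod_lt _ hpos⟩
  have hinj : Function.Injective f := by
    intro a b hab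
    have : N a % e = N b % e := congrArg Fin.val hab
    exact Fin.ext (c.class_eq a.2 b.2 this)
  have hsurj : Function.Surjective f := Finite.injective_iff_surjective.mp hinj
  obtain ⟨i, hi⟩ := hsurj ⟨r, hr⟩
  exact ⟨i, i.2, congrArg Fin.val hi⟩

lemma key (c : MMCtx e N H) {i j k : ℕ} (h1i : 1 ≤ i) (hi : i < e)
    (h1j : 1 ≤ j) (hj : j < e) (hk : k < e)
    (h : N k % e = (N i + N j) % e) : N k + e ≤ N i + N j := by
  by_contra hcon
  push_neg at hcon
  have hei : e < N i := c.lt_N h1i hi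
  have hej : e < N j := c.lt_N h1j hj
  have h2e : 1 < e := c.he
  have hfalse : ∀ t : ℕ, N k = N i + N j + t * e → False := by
    intro t heq
    have hNi : N i ∈ (N '' Set.Iio e) \ {N k} :=
      ⟨⟨i, hi, rfl⟩, fun hmem => by have := Set.mem_singleton_iff.mp hmem; omega⟩
    have hNj : N j ∈ (N '' Set.Iio e) \ {N k} :=
      ⟨⟨j, hj, rfl⟩, fun hmem => by have := Set.mem_singleton_iff.mp hmem; omega⟩
    exact c.helper hk (by omega)
      (add_mem (AddSubmonoid.subset_closure hNi) (AddSubmonoid.subset_closure hNj)) heq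
  rcases le_total (N i + N j) (N k) with hle | hle
  · have hd : e ∣ N k - (N i + N j) := (Nat.modEq_iff_dvd' hle).mp h.symm
    obtain ⟨t, ht⟩ := hd
    have hte : e * t = t * e := Nat.mul_comm e t
    exact hfalse t (by omega)
  · have hd : e ∣ N i + N j - N k := (Nat.modEq_iff_dvd' hle).mp h
    obtain ⟨t, ht⟩ := hd
    rcases Nat.eq_zero_or_pos t with h0 | h0
    · subst h0; simp at ht
      exact hfalse 0 (by omega)
    · have := Nat.le_mul_of_pos_right e h0
      omega

/-- Membership criterion via the Apéry set of the multiplicity `e`. -/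
lemma mem_iff (c : MMCtx e N H) (x : ℕ) :
    x ∈ H ↔ e ∣ x ∨ ∃ i, 1 ≤ i ∧ i < e ∧ N i ≤ x ∧ N i % e = x % e := by
  constructor
  · intro hx
    rw [c.gen] at hx
    induction hx using AddSubmonoid.closure_induction with
    | mem x hx =>
      obtain ⟨i, hi, rfl⟩ := hx
      rcases Nat.eq_zero_or_pos i with h | h
      · subst h; left; rw [c.base]
      · right; exact ⟨i, h, hi, le_rfl, rfl⟩
    | zero => left; exact dvd_zero e
    | add x y hx hy px py =>
      rcases px with hdx | ⟨i, h1i, hi, hix, hmx⟩ <;>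
        rcases py with hdy | ⟨j, h1j, hj, hjy, hmy⟩
      · left; exact dvd_add hdx hdy
      · right
        refine ⟨j, h1j, hj, by omega, ?_⟩
        have hx0 : x ≡ 0 [MOD e] := (Nat.modEq_zero_iff_dvd).mpr hdx
        have h2 : (x + y) % e = (0 + y) % e := hx0.add (Nat.ModEq.refl y)
        rw [Nat.zero_add] at h2
        exact hmy.trans h2.symm
      · right
        refine ⟨i, h1i, hi, by omega, ?_⟩
        have hy0 : y ≡ 0 [MOD e] := (Nat.modEq_zero_iff_dvd).mpr hdy
        have h2 : (x + y) % e = (x + 0) % e := (Nat.ModEq.refl x).add hy0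
        rw [Nat.add_zero] at h2
        exact hmx.trans h2.symm
      · have hsum : (N i + N j) % e = (x + y) % e := Nat.ModEq.add hmx hmy
        by_cases hr : (N i + N j) % e = 0
        · left
          exact Nat.dvd_of_mod_eq_zero (hsum ▸ hr)
        · obtain ⟨k, hk, hkr⟩ := c.surj_res (Nat.mod_lt (N i + N j) c.epos)
          have hk1 : 1 ≤ k := by
            rcases Nat.eq_zero_or_pos k with h0 | h0
            · exfalso; apply hr; rw [← hkr, h0, c.base, Nat.mod_self]
            · exact h0
          have := c.key h1i hi h1j hj hk hkr
          right
          exact ⟨k, hk1, hk, by omega, by rw [hkr]; exact hsum⟩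
  · rintro (⟨t, rfl⟩ | ⟨i, h1i, hi, hix, hmx⟩)
    · have := c.mul_e_mem t; rwa [Nat.mul_comm] at this
    · have hd : e ∣ x - N i := (Nat.modEq_iff_dvd' hix).mp hmx
      obtain ⟨t, ht⟩ := hd
      have : N i + e * t ∈ H := add_mem (c.memN hi) (by simpa [Nat.mul_comm] using c.mul_e_mem t)
      have hx : x = N i + e * t := by omega
      rwa [hx]


lemma mod_sub (c : MMCtx e N H) {x : ℕ} (hx : e ≤ x) : (x - e) % e = x % e := by
  have : x - e ≡ x [MOD e] := (Nat.modEq_iff_dvd' (by omega)).mpr (by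
    have : x - (x - e) = e := by omega
    rw [this])
  exact this

/-- Characterization of the gaps of `H`. -/
lemma not_mem_iff (c : MMCtx e N H) (x : ℕ) :
    x ∉ H ↔ ∃ k, 1 ≤ k ∧ k < e ∧ x < N k ∧ N k % e = x % e := by
  constructor
  · intro hx
    have hnd : ¬ e ∣ x := fun hd => hx ((c.mem_iff x).mpr (Or.inl hd))
    obtain ⟨k, hk, hkr⟩ := c.surj_res (Nat.mod_lt x c.epos)
    have hk1 : 1 ≤ k := by
      rcases Nat.eq_zero_or_pos k with h0 | h0
      · exfalso
        apply hnd
        apply Nat.dvd_of_mod_eq_zero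
        rw [← hkr, h0, c.base, Nat.mod_self]
      · exact h0
    refine ⟨k, hk1, hk, ?_, hkr⟩
    by_contra hcon
    push_neg at hcon
    exact hx ((c.mem_iff x).mpr (Or.inr ⟨k, hk1, hk, hcon, hkr⟩))
  · rintro ⟨k, hk1, hk, hlt, hmod⟩ hx
    rcases (c.mem_iff x).mp hx with hd | ⟨i, h1i, hi, hix, hmx⟩
    · apply c.not_dvd hk1 hk
      apply Nat.dvd_of_mod_eq_zero
      rw [hmod]
      omega
    · have : i = k := c.class_eq hi hk (hmx.trans hmod.symm)
      subst this
      omega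

lemma gen_sub_not_mem (c : MMCtx e N H) {k : ℕ} (hk1 : 1 ≤ k) (hk : k < e) :
    N k - e ∉ H := by
  rw [c.not_mem_iff]
  have := c.lt_N hk1 hk
  exact ⟨k, hk1, hk, by omega, (c.mod_sub (by omega)).symm⟩

lemma gap_le (c : MMCtx e N H) {x : ℕ} (hx : x ∉ H) : x ≤ N (e - 1) - e := by
  obtain ⟨k, hk1, hk, hlt, hmod⟩ := (c.not_mem_iff x).mp hx
  have hd : e ∣ N k - x := (Nat.modEq_iff_dvd' hlt.le).mp hmod.symm
  obtain ⟨t, ht⟩ := hd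
  have ht1 : 1 ≤ t := by
    rcases Nat.eq_zero_or_pos t with h0 | h0
    · subst h0; simp at ht; omega
    · exact h0
  have h2 : e ≤ e * t := Nat.le_mul_of_pos_right e ht1
  have hke : N k ≤ N (e - 1) := by
    rcases Nat.lt_or_ge k (e - 1) with h' | h'
    · exact (c.mono h' (by omega)).le
    · have : k = e - 1 := by omega
      subst this; exact le_rfl
  omega

lemma F_eq (c : MMCtx e N H) {F : ℕ} (hF : IsGreatest {x : ℕ | x ∉ H} F) :
    F = N (e - 1) - e := by
  have h1 : F ≤ N (e - 1) - e := c.gap_le hF.1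
  have h2 : N (e - 1) - e ≤ F := hF.2 (c.gen_sub_not_mem (by have := c.he; omega) (by have := c.he; omega))
  omega

lemma gt_F_mem (c : MMCtx e N H) {F : ℕ} (hF : IsGreatest {x : ℕ | x ∉ H} F)
    {x : ℕ} (hx : F < x) : x ∈ H := by
  by_contra hcon
  exact absurd (hF.2 hcon) (by omega)

/-- Minimal multiplicity: the sum of two nonzero generators minus `e` is in `H`. -/
lemma keyH (c : MMCtx e N H) {i j : ℕ} (h1i : 1 ≤ i) (hi : i < e)
    (h1j : 1 ≤ j) (hj : j < e) : N i + N j - e ∈ H := by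
  have hei : e < N i := c.lt_N h1i hi
  have hej : e < N j := c.lt_N h1j hj
  have hmod : (N i + N j - e) % e = (N i + N j) % e := c.mod_sub (by omega)
  rw [c.mem_iff]
  by_cases hr : (N i + N j) % e = 0
  · left
    exact Nat.dvd_of_mod_eq_zero (by rw [hmod]; exact hr)
  · obtain ⟨k, hk, hkr⟩ := c.surj_res (Nat.mod_lt (N i + N j) c.epos)
    have hk1 : 1 ≤ k := by
      rcases Nat.eq_zero_or_pos k with h0 | h0
      · exfalso; apply hr; rw [← hkr, h0, c.base, Nat.mod_self]
      · exact h0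
    have := c.key h1i hi h1j hj hk hkr
    right
    exact ⟨k, hk1, hk, by omega, by rw [hkr, hmod]⟩

/-- Decomposition of a nonzero element of `H`. -/
lemma decomp (c : MMCtx e N H) {h : ℕ} (hh : h ∈ H) :
    h = 0 ∨ ∃ k, k < e ∧ ∃ h', h' ∈ H ∧ h = N k + h' := by
  rw [c.gen] at hh
  induction hh using AddSubmonoid.closure_induction with
  | mem x hx =>
    obtain ⟨i, hi, rfl⟩ := hx
    exact Or.inr ⟨i, hi, 0, zero_mem _, (add_zero _).symm⟩
  | zero => exact Or.inl rfl
  | add x y hx hy px py =>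
    rcases px with h0 | ⟨k, hk, h', hh', heq⟩
    · subst h0
      rcases py with h0 | ⟨k, hk, h', hh', heq⟩
      · exact Or.inl (by omega)
      · exact Or.inr ⟨k, hk, h', hh', by omega⟩
    · refine Or.inr ⟨k, hk, h' + y, add_mem hh' (by rw [c.gen]; exact hy), by omega⟩

/-- `N i - e` is a pseudo-Frobenius number: adding any nonzero element lands in `H`. -/
lemma pf_add (c : MMCtx e N H) {i : ℕ} (h1i : 1 ≤ i) (hi : i < e)
    {h : ℕ} (hh : h ∈ H) (h0 : h ≠ 0) : (N i - e) + h ∈ H := by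
  have hei : e < N i := c.lt_N h1i hi
  rcases c.decomp hh with h' | ⟨k, hk, h', hh', heq⟩
  · exact absurd h' h0
  · rcases Nat.eq_zero_or_pos k with hk0 | hk0
    · subst hk0
      have hN0 : N 0 = e := c.base
      have harith : (N i - e) + h = N i + h' := by omega
      rw [harith]
      exact add_mem (c.memN hi) hh'
    · have hek : e < N k := c.lt_N hk0 hk
      have harith : (N i - e) + h = (N i + N k - e) + h' := by omega
      rw [harith]
      exact add_mem (c.keyH h1i hi hk0 hk) hh'

/-- Characterization of the pseudo-Frobenius numbers. -/
lemma PF_iff (c : MMCtx e N H) (f : ℕ) :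
    f ∈ PF H ↔ ∃ i, 1 ≤ i ∧ i < e ∧ f = N i - e := by
  constructor
  · rintro ⟨hfn, hfp⟩
    obtain ⟨k, hk1, hk, hlt, hmod⟩ := (c.not_mem_iff f).mp hfn
    have hfe : f + e ∈ H := hfp e c.e_mem (by have := c.he; omega)
    rcases (c.mem_iff (f + e)).mp hfe with hd | ⟨i, h1i, hi, hif, hmf⟩
    · exfalso
      apply c.not_dvd hk1 hk
      apply Nat.dvd_of_mod_eq_zero
      rw [hmod]
      have : e ∣ f := by
        have := Nat.dvd_sub hd (dvd_refl e)
        simpa using this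
      exact Nat.mod_eq_zero_of_dvd this
    · have hmod2 : (f + e) % e = f % e := by
        have : f + e - e = f := by omega
        rw [← this, c.mod_sub (by omega), this]
      have : i = k := c.class_eq hi hk (by rw [hmf, hmod2, ← hmod])
      subst this
      have hd2 : e ∣ N i - f := (Nat.modEq_iff_dvd' hlt.le).mp hmod.symm
      obtain ⟨t, ht⟩ := hd2
      have hge : e * t = 0 ∨ e ≤ e * t := by
        rcases Nat.eq_zero_or_pos t with h0' | h0'
        · subst h0'; simp
        · exact Or.inr (Nat.le_mul_of_pos_right e h0')
      exact ⟨i, h1i, hi, by omega⟩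
  · rintro ⟨i, h1i, hi, rfl⟩
    exact ⟨c.gen_sub_not_mem h1i hi, fun h hh h0 => c.pf_add h1i hi hh h0⟩

/-- An element of `H` that leaves `H` upon subtracting `e` is a generator. -/
lemma gen_of (c : MMCtx e N H) {x : ℕ} (hx : x ∈ H) (h0 : x ≠ 0)
    (hsub : x - e ∉ H) : ∃ k, 1 ≤ k ∧ k < e ∧ x = N k := by
  have hex : e ≤ x := c.ge_of_mem hx h0
  rcases (c.mem_iff x).mp hx with hd | ⟨i, h1i, hi, hix, hmx⟩
  · exfalso
    apply hsub
    rw [c.mem_iff]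
    left
    exact (Nat.dvd_sub hd (dvd_refl e))
  · refine ⟨i, h1i, hi, ?_⟩
    by_contra hne
    have hlt : N i < x := by omega
    have hd : e ∣ x - N i := (Nat.modEq_iff_dvd' hix).mp hmx
    obtain ⟨t, ht⟩ := hd
    have ht1 : 1 ≤ t := by
      rcases Nat.eq_zero_or_pos t with ht0 | ht0
      · subst ht0; simp at ht; omega
      · exact ht0
    have h2 : e ≤ e * t := Nat.le_mul_of_pos_right e ht1
    apply hsub
    rw [c.mem_iff]
    right
    exact ⟨i, h1i, hi, by omega, by rw [c.mod_sub hex]; exact hmx⟩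



lemma small_closure (c : MMCtx e N H) {x k : ℕ} (hk : k < e) (hx : x ∈ H)
    (hlt : x < N k) : x ∈ AddSubmonoid.closure ((N '' Set.Iio e) \ {N k}) := by
  rw [c.gen] at hx
  revert hlt
  induction hx using AddSubmonoid.closure_induction with
  | mem y hy =>
    intro hlt
    obtain ⟨i, hi, rfl⟩ := hy
    exact AddSubmonoid.subset_closure ⟨⟨i, hi, rfl⟩,
      fun hmem => absurd (Set.mem_singleton_iff.mp hmem) (by omega)⟩
  | zero => intro _; exact zero_mem _
  | add a b ha hb pa pb =>
    intro hlt
    exact add_mem (pa (by omega)) (pb (by omega))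

end MMCtx

lemma mem_HZ_iff (H : AddSubmonoid ℕ) (z : ℤ) : z ∈ HZ H ↔ 0 ≤ z ∧ z.toNat ∈ H := by
  constructor
  · rintro ⟨h, hh, rfl⟩
    exact ⟨Int.natCast_nonneg h, by simpa using hh⟩
  · rintro ⟨h1, h2⟩
    exact ⟨z.toNat, h2, Int.toNat_of_nonneg h1⟩

namespace MMCtx

variable {e : ℕ} {N : ℕ → ℕ} {H : AddSubmonoid ℕ}

lemma zero_mem_Omega (c : MMCtx e N H) {F : ℕ} (hF : IsGreatest {x : ℕ | x ∉ H} F) :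
    (0 : ℤ) ∈ Omega H F := by
  simp only [Omega, Set.mem_setOf_eq, sub_zero]
  rw [mem_HZ_iff]
  rintro ⟨-, hmem⟩
  exact hF.1 (by simpa using hmem)

lemma omega_gen (c : MMCtx e N H) {F : ℕ} (hF : IsGreatest {x : ℕ | x ∉ H} F)
    {i : ℕ} (h1i : 1 ≤ i) (hi : i < e) :
    ((N (e - 1) : ℤ) - N i) ∈ Omega H F := by
  simp only [Omega, Set.mem_setOf_eq]
  rw [mem_HZ_iff]
  rintro ⟨hpos, hmem⟩
  have hFe : F = N (e - 1) - e := c.F_eq hF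
  have heN : e ≤ N (e - 1) := c.le_N (by have := c.he; omega)
  have hie : e < N i := c.lt_N h1i hi
  have htn : ((F : ℤ) - ((N (e - 1) : ℤ) - N i)).toNat = N i - e := by omega
  rw [htn] at hmem
  exact c.gen_sub_not_mem h1i hi hmem

/-- Nearly Gorenstein implies the pairing property of the generators. -/
lemma EX_of_NG (c : MMCtx e N H) {F : ℕ} (hF : IsGreatest {x : ℕ | x ∉ H} F)
    (hng : ∀ x ∈ HZ H, x ≠ 0 → x ∈ Omega H F + OmegaInv H F) :
    ∀ j, 1 ≤ j → j ≤ e - 2 → ∃ k, 1 ≤ k ∧ k ≤ e - 2 ∧ N j + N k = e + N (e - 1) := by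
  intro j hj1 hj2
  have h2e : 1 < e := c.he
  have he3 : 3 ≤ e := by omega
  have hFe : F = N (e - 1) - e := c.F_eq hF
  have heN : e ≤ N (e - 1) := c.le_N (by omega)
  -- Step A : `e` belongs to the anti-canonical ideal.
  have hA : (e : ℤ) ∈ OmegaInv H F := by
    obtain ⟨w, hw, z, hz, hsum⟩ := Set.mem_add.mp
      (hng (e : ℤ) ⟨e, c.e_mem, rfl⟩ (by exact_mod_cast (by omega : e ≠ 0)))
    have hzH : z ∈ HZ H := by simpa using hz 0 (c.zero_mem_Omega hF)
    obtain ⟨h, hh, rfl⟩ := hzH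
    have hne : h ≠ 0 := by
      rintro rfl
      have h1e : e < N 1 := c.lt_N le_rfl (by omega)
      have h1lt : N 1 < N (e - 1) := c.mono (by omega) (by omega)
      have hω := hz _ (c.omega_gen hF le_rfl (by omega : 1 < e))
      rw [mem_HZ_iff] at hω
      have ht : ((((0:ℕ) : ℤ)) + ((N (e - 1) : ℤ) - N 1)).toNat = N (e - 1) - N 1 := by
        omega
      rw [ht] at hω
      have hg : N (e - 1) - N 1 ∈ H := hω.2
      have hadd := c.pf_add le_rfl (by omega : 1 < e) hg (by omega)
      have harith : (N 1 - e) + (N (e - 1) - N 1) = F := by omega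
      rw [harith] at hadd
      exact hF.1 hadd
    have hhe : e ≤ h := c.ge_of_mem hh hne
    have hw0 : (0 : ℤ) ≤ w := by
      by_contra hcon
      push_neg at hcon
      apply hw
      rw [mem_HZ_iff]
      refine ⟨by omega, c.gt_F_mem hF (by omega)⟩
    have hze : ((h : ℕ) : ℤ) = (e : ℤ) := by omega
    rwa [hze] at hz
  -- Step B : extract the pairing for `j`.
  have hje : e < N j := c.lt_N hj1 (by omega)
  have hjlt : N j < N (e - 1) := c.mono (by omega) (by omega)
  have hmem := hA _ (c.omega_gen hF hj1 (by omega))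
  rw [mem_HZ_iff] at hmem
  have htn : ((e : ℤ) + ((N (e - 1) : ℤ) - N j)).toNat = e + N (e - 1) - N j := by omega
  rw [htn] at hmem
  have haH : e + N (e - 1) - N j ∈ H := hmem.2
  have hasub : (e + N (e - 1) - N j) - e ∉ H := by
    have harith : (e + N (e - 1) - N j) - e = N (e - 1) - N j := by omega
    rw [harith]
    intro hmem2
    apply c.mini (e - 1) (by omega)
    have hltp : N (e - 1) - N j < N (e - 1) := by omega
    have hd : N (e - 1) - N j ∈ AddSubmonoid.closure ((N '' Set.Iio e) \ {N (e - 1)}) :=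
      c.small_closure (x := N (e - 1) - N j) (k := e - 1) (by omega) hmem2 hltp
    have hNj : N j ∈ (N '' Set.Iio e) \ {N (e - 1)} :=
      ⟨⟨j, Set.mem_Iio.mpr (by omega), rfl⟩, fun hmem3 => absurd (Set.mem_singleton_iff.mp hmem3) (by omega)⟩
    have hsum2 := add_mem (AddSubmonoid.subset_closure hNj) hd
    have harith2 : N j + (N (e - 1) - N j) = N (e - 1) := by omega
    rwa [harith2] at hsum2
  obtain ⟨k, hk1, hk, hak⟩ := c.gen_of haH (by omega) hasub
  have hkN : N k < N (e - 1) := by omega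
  have hke2 : k ≤ e - 2 := by
    by_contra hcon
    push_neg at hcon
    have : k = e - 1 := by omega
    subst this
    omega
  exact ⟨k, hk1, hke2, by omega⟩

/-- Almost symmetry (Nari's condition) implies the pairing property. -/
lemma EX_of_AS1 (c : MMCtx e N H) {F : ℕ} (hF : IsGreatest {x : ℕ | x ∉ H} F)
    (h1 : ∀ f ∈ PF H, f ≠ F → F - f ∈ PF H) :
    ∀ j, 1 ≤ j → j ≤ e - 2 → ∃ k, 1 ≤ k ∧ k ≤ e - 2 ∧ N j + N k = e + N (e - 1) := by
  intro j hj1 hj2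
  have h2e : 1 < e := c.he
  have he3 : 3 ≤ e := by omega
  have hFe : F = N (e - 1) - e := c.F_eq hF
  have heN : e ≤ N (e - 1) := c.le_N (by omega)
  have hje : e < N j := c.lt_N hj1 (by omega)
  have hjlt : N j < N (e - 1) := c.mono (by omega) (by omega)
  have hfPF : N j - e ∈ PF H := (c.PF_iff _).mpr ⟨j, hj1, by omega, rfl⟩
  have hfne : N j - e ≠ F := by omega
  obtain ⟨k, hk1, hk, hkeq⟩ := (c.PF_iff _).mp (h1 _ hfPF hfne)
  have hke : e < N k := c.lt_N hk1 hk
  have hpair : N j + N k = e + N (e - 1) := by omega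
  have hkN : N k < N (e - 1) := by omega
  have hke2 : k ≤ e - 2 := by
    by_contra hcon
    push_neg at hcon
    have : k = e - 1 := by omega
    subst this
    omega
  exact ⟨k, hk1, hke2, hpair⟩

/-- The pairing property forces the symmetric pairing `k = e - 1 - j`. -/
lemma AS2_of_EX (c : MMCtx e N H)
    (hex : ∀ j, 1 ≤ j → j ≤ e - 2 → ∃ k, 1 ≤ k ∧ k ≤ e - 2 ∧ N j + N k = e + N (e - 1)) :
    ∀ i, 1 ≤ i → i ≤ e - 1 → N i + N (e - 1 - i) = e + N (e - 1) := by
  classical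
  intro i hi1 hi2
  have h2e : 1 < e := c.he
  rcases Nat.eq_or_lt_of_le hi2 with heq | hlt
  · subst heq
    have h0 : N 0 = e := c.base
    have hz : e - 1 - (e - 1) = 0 := by omega
    rw [hz, h0]
    omega
  · have hile : i ≤ e - 2 := by omega
    set K : ℕ → ℕ := fun j => if h : 1 ≤ j ∧ j ≤ e - 2 then (hex j h.1 h.2).choose else 0
      with hKdef
    have hKspec : ∀ j, 1 ≤ j → j ≤ e - 2 →
        1 ≤ K j ∧ K j ≤ e - 2 ∧ N j + N (K j) = e + N (e - 1) := by
      intro j h1 h2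
      have hsp := (hex j h1 h2).choose_spec
      simp only [hKdef]
      rw [dif_pos ⟨h1, h2⟩]
      exact hsp
    have hanti : ∀ j j', 1 ≤ j → j < j' → j' ≤ e - 2 → K j' < K j := by
      intro j j' h1 h2 h3
      obtain ⟨s1a, s1b, s1c⟩ := hKspec j h1 (by omega)
      obtain ⟨s2a, s2b, s2c⟩ := hKspec j' (by omega) h3
      have hNlt : N j < N j' := c.mono h2 (by omega)
      have hNK : N (K j') < N (K j) := by omega
      by_contra hcon
      push_neg at hcon
      rcases Nat.eq_or_lt_of_le hcon with hceq | hclt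
      · rw [hceq] at hNK; omega
      · have := c.mono hclt (by omega)
        omega
    have hchain : ∀ d j, 1 ≤ j → j + d ≤ e - 2 → K (j + d) + d ≤ K j := by
      intro d
      induction d with
      | zero => intro j h1 h2; simp
      | succ d ih =>
        intro j h1 h2
        have h3 := ih j h1 (by omega)
        have h4 : K (j + d + 1) < K (j + d) := hanti (j + d) (j + d + 1) (by omega)
          (by omega) (by omega)
        have h5 : j + (d + 1) = j + d + 1 := by omega
        rw [h5]
        omega
    obtain ⟨hsa, hsb, hsc⟩ := hKspec i hi1 hile
    have hlow : e - 1 - i ≤ K i := by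
      have h5 := hchain (e - 2 - i) i hi1 (by omega)
      have he2 : i + (e - 2 - i) = e - 2 := by omega
      rw [he2] at h5
      have h6 := (hKspec (e - 2) (by omega) le_rfl).1
      omega
    have hup : K i ≤ e - 1 - i := by
      have h5 := hchain (i - 1) 1 le_rfl (by omega)
      have h1i : 1 + (i - 1) = i := by omega
      rw [h1i] at h5
      have h6 := (hKspec 1 le_rfl (by omega)).2.1
      omega
    have hKi : K i = e - 1 - i := by omega
    rw [hKi] at hsc
    exact hsc

/-- The explicit pairing implies Nari's almost-symmetry condition. -/
lemma AS1_of_AS2 (c : MMCtx e N H) {F : ℕ} (hF : IsGreatest {x : ℕ | x ∉ H} F)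
    (h2 : ∀ i, 1 ≤ i → i ≤ e - 1 → N i + N (e - 1 - i) = e + N (e - 1)) :
    ∀ f ∈ PF H, f ≠ F → F - f ∈ PF H := by
  intro f hf hfne
  obtain ⟨i, hi1, hi, rfl⟩ := (c.PF_iff f).mp hf
  have h2e : 1 < e := c.he
  have hFe : F = N (e - 1) - e := c.F_eq hF
  have heN : e ≤ N (e - 1) := c.le_N (by omega)
  have hie : e < N i := c.lt_N hi1 hi
  have hine : i ≠ e - 1 := by
    rintro rfl
    exact hfne (by omega)
  have hilt : N i < N (e - 1) := c.mono (by omega) (by omega)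
  have hpair := h2 i hi1 (by omega)
  have h1k : 1 ≤ e - 1 - i := by omega
  have hk : e - 1 - i < e := by omega
  have hke : e < N (e - 1 - i) := c.lt_N h1k hk
  rw [c.PF_iff]
  exact ⟨e - 1 - i, h1k, hk, by omega⟩

/-- The explicit pairing implies the nearly Gorenstein property. -/
lemma NG_of_AS2 (c : MMCtx e N H) {F : ℕ} (hF : IsGreatest {x : ℕ | x ∉ H} F)
    (h2 : ∀ i, 1 ≤ i → i ≤ e - 1 → N i + N (e - 1 - i) = e + N (e - 1)) :
    ∀ x ∈ HZ H, x ≠ 0 → x ∈ Omega H F + OmegaInv H F := by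
  intro x hx hx0
  obtain ⟨h, hh, rfl⟩ := hx
  have hne : h ≠ 0 := fun h0 => hx0 (by exact_mod_cast congrArg (Nat.cast : ℕ → ℤ) h0)
  rw [Set.mem_add]
  refine ⟨0, c.zero_mem_Omega hF, (h : ℤ), ?_, zero_add _⟩
  intro w hw
  simp only [Omega, Set.mem_setOf_eq] at hw
  have h2e : 1 < e := c.he
  have hFe : F = N (e - 1) - e := c.F_eq hF
  have heN : e ≤ N (e - 1) := c.le_N (by omega)
  have hhe : e ≤ h := c.ge_of_mem hh hne
  have hN0 : N 0 = e := c.base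
  rcases lt_or_ge ((F : ℤ) - w) 0 with hneg | hpos
  · rw [mem_HZ_iff]
    refine ⟨by omega, c.gt_F_mem hF (by omega)⟩
  · have hgnot : ((F : ℤ) - w).toNat ∉ H := by
      intro hmem
      exact hw ((mem_HZ_iff H _).mpr ⟨hpos, hmem⟩)
    have hgF : ((F : ℤ) - w).toNat ≤ F := hF.2 hgnot
    obtain ⟨k, hk1, hk, hlt, hmod⟩ := (c.not_mem_iff _).mp hgnot
    have hkN : e < N k := c.lt_N hk1 hk
    have hd : e ∣ N k - ((F : ℤ) - w).toNat := (Nat.modEq_iff_dvd' hlt.le).mp hmod.symm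
    obtain ⟨t, ht⟩ := hd
    have ht1 : 1 ≤ t := by
      rcases Nat.eq_zero_or_pos t with h0 | h0
      · subst h0; simp at ht; omega
      · exact h0
    have hpair := h2 k hk1 (by omega)
    have hjlt : e - 1 - k < e := by omega
    rcases Nat.lt_or_ge t 2 with ht2 | ht2
    · -- t = 1
      have hteq : t = 1 := by omega
      subst hteq
      simp only [Nat.mul_one] at ht
      rcases Nat.eq_zero_or_pos (e - 1 - k) with hjj0 | hjj0
      · -- k pairs with 0 : then N k = N (e-1) and w = 0
        rw [hjj0, hN0] at hpair
        rw [mem_HZ_iff]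
        refine ⟨by omega, ?_⟩
        have harith : ((h : ℤ) + w).toNat = h := by omega
        rw [harith]
        exact hh
      · have hjje : e < N (e - 1 - k) := c.lt_N hjj0 hjlt
        rcases c.decomp hh with h0 | ⟨l, hl, h', hhp, heq⟩
        · exact absurd h0 hne
        · rcases Nat.eq_zero_or_pos l with hl0 | hl0
          · subst hl0
            rw [mem_HZ_iff]
            refine ⟨by omega, ?_⟩
            have harith : ((h : ℤ) + w).toNat = h' + N (e - 1 - k) := by omega
            rw [harith]
            exact add_mem hhp (c.memN hjlt)
          · have hle : e < N l := c.lt_N hl0 hl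
            rw [mem_HZ_iff]
            refine ⟨by omega, ?_⟩
            have harith : ((h : ℤ) + w).toNat = (N l + N (e - 1 - k) - e) + h' := by omega
            rw [harith]
            exact add_mem (c.keyH hl0 hl hjj0 hjlt) hhp
    · -- t ≥ 2
      have hmul : e * t = e * (t - 2) + 2 * e := by
        have hsub : t - 2 + 2 = t := by omega
        calc e * t = e * (t - 2 + 2) := by rw [hsub]
        _ = e * (t - 2) + e * 2 := Nat.mul_add e _ _
        _ = e * (t - 2) + 2 * e := by ring
      have hcomm : (t - 2) * e = e * (t - 2) := Nat.mul_comm _ _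
      rw [mem_HZ_iff]
      refine ⟨by omega, ?_⟩
      have harith : ((h : ℤ) + w).toNat = h + N (e - 1 - k) + (t - 2) * e := by omega
      rw [harith]
      exact add_mem (add_mem hh (c.memN hjlt)) (c.mul_e_mem (t - 2))

end MMCtx

/-- Let `H = ⟨n₁,…,n_e⟩` be a numerical semigroup of minimal multiplicity
(`n₁ = e`) with Frobenius number `F`. Then `H` is nearly Gorenstein iff `H` is
almost symmetric (Nari's criterion on `PF(H)`), and more precisely iff
`n₁ + n_e = n_i + n_{e−i+1}` for `i = 2,…,e`. -/
theorem minimal_multiplicity_ng_iff_as (e : ℕ) (he : 1 < e) (n : Fin e → ℕ)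
    (hmono : StrictMono n) (H : AddSubmonoid ℕ)
    (hgen : H = AddSubmonoid.closure (Set.range n))
    (hmin : ∀ i, n i ∉ AddSubmonoid.closure (Set.range n \ {n i}))
    (hcof : {x : ℕ | x ∉ H}.Finite)
    (hmm : n ⟨0, by omega⟩ = e)
    (F : ℕ) (hF : IsGreatest {x : ℕ | x ∉ H} F) :
    ((∀ x ∈ HZ H, x ≠ 0 → x ∈ Omega H F + OmegaInv H F) ↔
        (∀ f ∈ PF H, f ≠ F → F - f ∈ PF H)) ∧
    ((∀ x ∈ HZ H, x ≠ 0 → x ∈ Omega H F + OmegaInv H F) ↔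
        (∀ i : ℕ, (h2 : 2 ≤ i) → (hi : i ≤ e) →
          n ⟨0, by omega⟩ + n ⟨e - 1, by omega⟩ =
            n ⟨i - 1, by omega⟩ + n ⟨e - i, by omega⟩)) := by
  have hepos : 0 < e := by omega
  let N : ℕ → ℕ := fun j => n ⟨min j (e - 1), by omega⟩
  have hNdef : ∀ j (h : j < e), N j = n ⟨j, h⟩ := fun j h => by
    show n _ = n _
    congr 1
    exact Fin.ext (by simp; omega)
  have hset : N '' Set.Iio e = Set.range n := by
    ext x
    constructor
    · rintro ⟨j, hj, rfl⟩
      exact ⟨⟨j, hj⟩, (hNdef j hj).symm⟩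
    · rintro ⟨i, rfl⟩
      exact ⟨i.1, i.2, by rw [hNdef i.1 i.2]⟩
  have c : MMCtx e N H := {
    he := he
    mono := by
      intro i j hij hj
      rw [hNdef i (by omega), hNdef j hj]
      exact hmono (Fin.mk_lt_mk.mpr hij)
    base := by rw [hNdef 0 hepos]; exact hmm
    gen := by rw [hgen, hset]
    mini := by
      intro i hi
      rw [hNdef i hi, hset]
      exact hmin ⟨i, hi⟩ }
  have hNbase : N 0 = e := c.base
  constructor
  · constructor
    · intro hng
      exact c.AS1_of_AS2 hF (c.AS2_of_EX (c.EX_of_NG hF hng))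
    · intro h1
      exact c.NG_of_AS2 hF (c.AS2_of_EX (c.EX_of_AS1 hF h1))
  · constructor
    · intro hng i h2i hie
      have has2 := c.AS2_of_EX (c.EX_of_NG hF hng)
      have hp := has2 (i - 1) (by omega) (by omega)
      rw [show e - 1 - (i - 1) = e - i by omega] at hp
      simp only [← hNdef]
      omega
    · intro hrhs
      apply c.NG_of_AS2 hF
      intro i hi1 hi2
      have hp := hrhs (i + 1) (by omega) (by omega)
      simp only [← hNdef] at hp
      rw [show i + 1 - 1 = i by omega, show e - (i + 1) = e - 1 - i by omega] at hp
      omega
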